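/- Let λ > 0, let y₁, …, y_n ∈ ℝ^m, let c : ℝ^d × ℝ^m → ℝ be continuously differentiable, let ζ be a compactly supported Borel probability measure on ℝ^q, and let g : ℝ^k × ℝ^q → ℝ^d be continuously differentiable. For ψ ∈ ℝⁿ, set ψ^{c,λ}(x) = −λ · log( (1/n)·Σ_i exp((ψ_i − c(x, y_i))/λ) ) and F(ψ, θ) = ∫ ψ^{c,λ}(g(θ, z)) dζ(z) + (1/n)·Σ_i ψ_i. Assume there is a continuous map s : ℝ^k → ℝⁿ such that for every θ, F(ψ, θ) ≤ F(s(θ), θ) for all ψ ∈ ℝⁿ. Then the value function W(θ) = F(s(θ), θ) = sup_{ψ∈ℝⁿ} F(ψ, θ) is differentiable at every θ ∈ ℝ^k, with gradient ∇W(θ) = ∫ (∂_θ g(θ, z))ᵀ · Σ_{i=1}^n η_i(g(θ, z)) · ∇_x c(g(θ, z), y_i) dζ(z), where η_i(x) = exp((s(θ)_i − c(x, y_i))/λ) / Σ_j exp((s(θ)_j − c(x, y_j))/λ). -/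

import Mathlib

set_option maxHeartbeats 2000000

open MeasureTheory Finset Filter Topology

section Aux

lemma envelope_hasFDerivAt {Ψ : Type*} [TopologicalSpace Ψ]
    {Θ : Type*} [NormedAddCommGroup Θ] [NormedSpace ℝ Θ]
    (F : Ψ → Θ → ℝ) (D : Ψ → Θ → Θ →L[ℝ] ℝ) (s : Θ → Ψ) (θ₀ : Θ)
    (hFd : ∀ ψ θ, HasFDerivAt (F ψ) (D ψ θ) θ)
    (hD : ContinuousAt (fun p : Ψ × Θ => D p.1 p.2) (s θ₀, θ₀))
    (hs : ContinuousAt s θ₀)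
    (hmax : ∀ θ ψ, F ψ θ ≤ F (s θ) θ) :
    HasFDerivAt (fun θ => F (s θ) θ) (D (s θ₀) θ₀) θ₀ := by
  rw [hasFDerivAt_iff_isLittleO_nhds_zero]
  rw [Asymptotics.isLittleO_iff]
  intro ε hε
  set D₀ := D (s θ₀) θ₀ with hD₀
  have hset : {p : Ψ × Θ | ‖D p.1 p.2 - D₀‖ ≤ ε} ∈ 𝓝 (s θ₀, θ₀) := by
    have : ContinuousAt (fun p : Ψ × Θ => ‖D p.1 p.2 - D₀‖) (s θ₀, θ₀) := by
      exact (hD.sub continuousAt_const).norm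
    have h0 : ‖D (s θ₀) θ₀ - D₀‖ = 0 := by simp [hD₀]
    have := this.preimage_mem_nhds (t := Set.Iio ε) (by rw [h0]; exact Iio_mem_nhds hε)
    exact mem_of_superset this (fun p hp => show ‖D p.1 p.2 - D₀‖ ≤ ε from le_of_lt hp)
  rw [mem_nhds_prod_iff] at hset
  obtain ⟨U, hU, V, hV, hUV⟩ := hset
  obtain ⟨r, hr, hball⟩ := Metric.mem_nhds_iff.mp hV
  have h1 : ∀ᶠ h : Θ in 𝓝 0, s (θ₀ + h) ∈ U := by
    have : ContinuousAt (fun h : Θ => s (θ₀ + h)) 0 :=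
      ContinuousAt.comp (by simpa using hs) (by fun_prop)
    exact this.preimage_mem_nhds (by simpa using hU)
  have h2 : ∀ᶠ h : Θ in 𝓝 0, ‖h‖ < r := by
    have := Metric.ball_mem_nhds (0 : Θ) hr
    filter_upwards [this] with h hh using by simpa using hh
  have h3 : ∀ᶠ h : Θ in 𝓝 0,
      ‖F (s θ₀) (θ₀ + h) - F (s θ₀) θ₀ - D₀ h‖ ≤ ε * ‖h‖ := by
    exact (Asymptotics.isLittleO_iff.mp
      (hasFDerivAt_iff_isLittleO_nhds_zero.mp (hFd (s θ₀) θ₀))) hε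
  filter_upwards [h1, h2, h3] with h hU' hr' h3'
  set ψ' := s (θ₀ + h) with hψ'
  have key : ∀ θ ∈ Metric.ball θ₀ r, ‖D ψ' θ - D₀‖ ≤ ε := by
    intro θ hθ
    have hm := hUV (Set.mk_mem_prod hU' (hball hθ)); simpa using hm
  have hmvt : ‖(F ψ' (θ₀ + h) - D₀ (θ₀ + h)) - (F ψ' θ₀ - D₀ θ₀)‖ ≤ ε * ‖(θ₀ + h) - θ₀‖ := by
    apply Convex.norm_image_sub_le_of_norm_hasFDerivWithin_le
      (f := fun θ => F ψ' θ - D₀ θ) (f' := fun θ => D ψ' θ - D₀) (s := Metric.ball θ₀ r)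
    · intro θ hθ
      exact (((hFd ψ' θ).sub (D₀.hasFDerivAt)).hasFDerivWithinAt)
    · exact key
    · exact convex_ball θ₀ r
    · exact Metric.mem_ball_self hr
    · simpa using hr'
  have hmvt' : |F ψ' (θ₀ + h) - F ψ' θ₀ - D₀ h| ≤ ε * ‖h‖ := by
    have e1 : D₀ (θ₀ + h) - D₀ θ₀ = D₀ h := by rw [← ContinuousLinearMap.map_sub]; congr 1; abel
    calc |F ψ' (θ₀ + h) - F ψ' θ₀ - D₀ h|
        = ‖(F ψ' (θ₀ + h) - D₀ (θ₀ + h)) - (F ψ' θ₀ - D₀ θ₀)‖ := by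
          rw [Real.norm_eq_abs]; congr 1; rw [← e1]; ring
      _ ≤ ε * ‖(θ₀ + h) - θ₀‖ := hmvt
      _ = ε * ‖h‖ := by congr 1; simp
  have lower : F (s θ₀) (θ₀ + h) - F (s θ₀) θ₀ ≤ F (s (θ₀ + h)) (θ₀ + h) - F (s θ₀) θ₀ := by
    have := hmax (θ₀ + h) (s θ₀); linarith
  have upper : F (s (θ₀ + h)) (θ₀ + h) - F (s θ₀) θ₀ ≤ F ψ' (θ₀ + h) - F ψ' θ₀ := by
    have := hmax θ₀ ψ'; linarith
  rw [Real.norm_eq_abs, abs_le]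
  rw [Real.norm_eq_abs, abs_le] at h3'
  rw [abs_le] at hmvt'
  constructor
  · have := h3'.1; nlinarith [lower]
  · nlinarith [upper, hmvt'.2]

lemma lse_hasFDerivAt {X : Type*} [NormedAddCommGroup X] [NormedSpace ℝ X]
    (lam : ℝ) (hlam : 0 < lam) (n : ℕ) (hn : 0 < n) (ψ : Fin n → ℝ)
    (f : Fin n → X → ℝ) (f' : Fin n → X →L[ℝ] ℝ) (x : X)
    (hf : ∀ i, HasFDerivAt (f i) (f' i) x) :
    HasFDerivAt (fun x => -lam * Real.log ((1/(n:ℝ)) * ∑ i, Real.exp ((ψ i - f i x) / lam)))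
      (∑ i, (Real.exp ((ψ i - f i x) / lam) / ∑ j, Real.exp ((ψ j - f j x) / lam)) • f' i) x := by
  have hS : 0 < ∑ j, Real.exp ((ψ j - f j x) / lam) := by
    apply Finset.sum_pos (fun j _ => Real.exp_pos _)
    exact ⟨⟨0, hn⟩, Finset.mem_univ _⟩
  have hn' : (0:ℝ) < (n:ℝ) := by exact_mod_cast hn
  set e : Fin n → ℝ := fun i => Real.exp ((ψ i - f i x) / lam) with he
  have hterm : ∀ i : Fin n, HasFDerivAt (fun x => Real.exp ((ψ i - f i x) / lam))
      (e i • (lam⁻¹ • (-(f' i)))) x := by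
    intro i
    have h1 : HasFDerivAt (fun x => (ψ i - f i x) / lam) (lam⁻¹ • (-(f' i))) x := by
      have := ((hasFDerivAt_const (ψ i) x).sub (hf i)).mul_const lam⁻¹
      simpa [div_eq_mul_inv, zero_sub, mul_comm] using this
    simpa using h1.exp
  have hsum : HasFDerivAt (fun x => ∑ i, Real.exp ((ψ i - f i x) / lam))
      (∑ i, e i • (lam⁻¹ • (-(f' i)))) x := HasFDerivAt.fun_sum (fun i _ => hterm i)
  have hmul : HasFDerivAt (fun x => (1/(n:ℝ)) * ∑ i, Real.exp ((ψ i - f i x) / lam))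
      ((1/(n:ℝ)) • ∑ i, e i • (lam⁻¹ • (-(f' i)))) x := hsum.const_mul _
  have hne : (1/(n:ℝ)) * ∑ i, Real.exp ((ψ i - f i x) / lam) ≠ 0 := by positivity
  have hlog := hmul.log hne
  have hfin := hlog.const_mul (-lam)
  refine hfin.congr_fderiv (Eq.symm ?_)
  ext v
  simp only [ContinuousLinearMap.coe_smul', Pi.smul_apply, ContinuousLinearMap.coe_sum',
    Finset.sum_apply, ContinuousLinearMap.coe_neg', Pi.neg_apply, smul_eq_mul]
  have hSne : (∑ j, Real.exp ((ψ j - f j x) / lam)) ≠ 0 := ne_of_gt hS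
  have hLHS : (∑ i, Real.exp ((ψ i - f i x) / lam) / (∑ j, Real.exp ((ψ j - f j x) / lam)) * (f' i) v)
      = (∑ i, e i * (f' i) v) / (∑ j, e j) := by
    rw [Finset.sum_div]
    exact Finset.sum_congr rfl fun i _ => (div_mul_eq_mul_div _ _ _)
  have hRHS2 : (∑ i, e i * (lam⁻¹ * -((f' i) v))) = -lam⁻¹ * ∑ i, e i * (f' i) v := by
    rw [Finset.mul_sum]; exact Finset.sum_congr rfl fun i _ => by ring
  rw [hLHS, hRHS2]
  field_simp
  ring

end Aux

theorem semidiscrete_W_hasGradient {d m q k : ℕ}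
    (lam : ℝ) (hlam : 0 < lam) (n : ℕ) (hn : 0 < n)
    (y : Fin n → EuclideanSpace ℝ (Fin m))
    (c : EuclideanSpace ℝ (Fin d) × EuclideanSpace ℝ (Fin m) → ℝ)
    (hc : ContDiff ℝ 1 c)
    (ζ : Measure (EuclideanSpace ℝ (Fin q))) [IsProbabilityMeasure ζ]
    (hζ : ∃ K : Set (EuclideanSpace ℝ (Fin q)), IsCompact K ∧ ζ Kᶜ = 0)
    (g : EuclideanSpace ℝ (Fin k) × EuclideanSpace ℝ (Fin q) → EuclideanSpace ℝ (Fin d))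
    (hg : ContDiff ℝ 1 g)
    (s : EuclideanSpace ℝ (Fin k) → Fin n → ℝ) (hs : Continuous s)
    (F : (Fin n → ℝ) → EuclideanSpace ℝ (Fin k) → ℝ)
    (hF : ∀ ψ θ, F ψ θ =
      (∫ z, (-lam * Real.log
          ((1 / (n : ℝ)) * ∑ i, Real.exp ((ψ i - c (g (θ, z), y i)) / lam))) ∂ζ)
        + (1 / (n : ℝ)) * ∑ i, ψ i)
    (hmax : ∀ (θ : EuclideanSpace ℝ (Fin k)) (ψ : Fin n → ℝ), F ψ θ ≤ F (s θ) θ) :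
    ∀ θ : EuclideanSpace ℝ (Fin k),
      HasGradientAt (fun θ' => F (s θ') θ')
        (∫ z, (ContinuousLinearMap.adjoint
            (fderiv ℝ (fun θ' : EuclideanSpace ℝ (Fin k) => g (θ', z)) θ))
          (∑ i, (Real.exp ((s θ i - c (g (θ, z), y i)) / lam) /
                ∑ j, Real.exp ((s θ j - c (g (θ, z), y j)) / lam)) •
              gradient (fun x : EuclideanSpace ℝ (Fin d) => c (x, y i)) (g (θ, z))) ∂ζ)
        θ := by
  intro θ₀
  obtain ⟨K, hK, hKc⟩ := hζ
  have hK_ae : ∀ᵐ z ∂ζ, z ∈ K := mem_ae_iff.mpr (by simpa using hKc)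
  have hnR : (0:ℝ) < (n:ℝ) := by exact_mod_cast hn
  -- c sections
  have hci : ∀ i : Fin n, ContDiff ℝ 1 (fun x : EuclideanSpace ℝ (Fin d) => c (x, y i)) :=
    fun i => hc.comp (contDiff_id.prodMk contDiff_const)
  obtain ⟨Dc, hDcs⟩ : ∃ Dc : EuclideanSpace ℝ (Fin d) → Fin n → (EuclideanSpace ℝ (Fin d) →L[ℝ] ℝ),
      Dc = fun x i => fderiv ℝ (fun x' => c (x', y i)) x := ⟨_, rfl⟩
  have hDc_cont : ∀ i, Continuous (fun x => Dc x i) := by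
    intro i
    simp only [hDcs]
    exact (hci i).continuous_fderiv one_ne_zero
  have hDc_has : ∀ i x, HasFDerivAt (fun x' => c (x', y i)) (Dc x i) x := by
    intro i x
    simp only [hDcs]
    exact ((hci i).differentiable one_ne_zero x).hasFDerivAt
  -- g sections
  obtain ⟨Dg, hDgs⟩ : ∃ Dg : EuclideanSpace ℝ (Fin k) → EuclideanSpace ℝ (Fin q) →
      (EuclideanSpace ℝ (Fin k) →L[ℝ] EuclideanSpace ℝ (Fin d)),
      Dg = fun θ z => fderiv ℝ (fun θ' => g (θ', z)) θ := ⟨_, rfl⟩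
  have hgz : ∀ z, ContDiff ℝ 1 (fun θ' : EuclideanSpace ℝ (Fin k) => g (θ', z)) :=
    fun z => hg.comp (contDiff_id.prodMk contDiff_const)
  have hDg_has : ∀ θ z, HasFDerivAt (fun θ' => g (θ', z)) (Dg θ z) θ := by
    intro θ z
    simp only [hDgs]
    exact ((hgz z).differentiable one_ne_zero θ).hasFDerivAt
  have hDg_cont : Continuous (fun p : EuclideanSpace ℝ (Fin k) × EuclideanSpace ℝ (Fin q) => Dg p.1 p.2) := by
    have heq : ∀ p : EuclideanSpace ℝ (Fin k) × EuclideanSpace ℝ (Fin q),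
        Dg p.1 p.2 = (fderiv ℝ g (p.1, p.2)).comp
          ((ContinuousLinearMap.id ℝ (EuclideanSpace ℝ (Fin k))).prod 0) := by
      intro p
      have h1 : HasFDerivAt (fun θ' : EuclideanSpace ℝ (Fin k) => (θ', p.2))
          ((ContinuousLinearMap.id ℝ (EuclideanSpace ℝ (Fin k))).prod 0) p.1 :=
        (hasFDerivAt_id p.1).prodMk (hasFDerivAt_const p.2 p.1)
      have h2 := ((hg.differentiable one_ne_zero (p.1, p.2)).hasFDerivAt).comp p.1 h1
      simp only [hDgs]
      exact h2.fderiv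
    rw [funext heq]
    exact Continuous.clm_comp
      ((hg.continuous_fderiv one_ne_zero).comp (continuous_fst.prodMk continuous_snd))
      continuous_const
  -- eta
  have hS_pos : ∀ (ψ : Fin n → ℝ) (x : EuclideanSpace ℝ (Fin d)),
      0 < ∑ j, Real.exp ((ψ j - c (x, y j)) / lam) :=
    fun ψ x => Finset.sum_pos (fun j _ => Real.exp_pos _) ⟨⟨0, hn⟩, Finset.mem_univ _⟩
  obtain ⟨eta, hetas⟩ : ∃ eta : (Fin n → ℝ) → EuclideanSpace ℝ (Fin d) → Fin n → ℝ,
      eta = fun ψ x i => Real.exp ((ψ i - c (x, y i)) / lam) /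
        ∑ j, Real.exp ((ψ j - c (x, y j)) / lam) := ⟨_, rfl⟩
  have hexp_cont : ∀ i : Fin n, Continuous (fun p : (Fin n → ℝ) × EuclideanSpace ℝ (Fin d) =>
      Real.exp ((p.1 i - c (p.2, y i)) / lam)) := by
    intro i
    exact Real.continuous_exp.comp ((((continuous_apply i).comp continuous_fst : Continuous fun p : (Fin n → ℝ) × EuclideanSpace ℝ (Fin d) => p.1 i).sub
      (hc.continuous.comp (continuous_snd.prodMk continuous_const))).div_const lam)
  have heta_cont : ∀ i : Fin n, Continuous (fun p : (Fin n → ℝ) × EuclideanSpace ℝ (Fin d) =>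
      eta p.1 p.2 i) := by
    intro i
    simp only [hetas]
    apply (hexp_cont i).div (continuous_finset_sum _ fun j _ => hexp_cont j)
    exact fun p => ne_of_gt (hS_pos p.1 p.2)
  -- Dx
  obtain ⟨Dx, hDxs⟩ : ∃ Dx : (Fin n → ℝ) → EuclideanSpace ℝ (Fin d) →
      (EuclideanSpace ℝ (Fin d) →L[ℝ] ℝ),
      Dx = fun ψ x => ∑ i, eta ψ x i • Dc x i := ⟨_, rfl⟩
  have hDx_cont : Continuous (fun p : (Fin n → ℝ) × EuclideanSpace ℝ (Fin d) => Dx p.1 p.2) := by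
    simp only [hDxs]
    exact continuous_finset_sum _ fun i _ => (heta_cont i).smul ((hDc_cont i).comp continuous_snd)
  have hDx_has : ∀ (ψ : Fin n → ℝ) (x : EuclideanSpace ℝ (Fin d)),
      HasFDerivAt (fun x' => -lam * Real.log ((1/(n:ℝ)) * ∑ i, Real.exp ((ψ i - c (x', y i)) / lam)))
        (Dx ψ x) x := by
    intro ψ x
    simp only [hDxs, hetas]
    exact lse_hasFDerivAt lam hlam n hn ψ (fun i x' => c (x', y i)) (Dc x) x (fun i => hDc_has i x)
  -- Dθ
  obtain ⟨Dθ, hDθs⟩ : ∃ Dθ : (Fin n → ℝ) → EuclideanSpace ℝ (Fin k) → EuclideanSpace ℝ (Fin q) →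
      (EuclideanSpace ℝ (Fin k) →L[ℝ] ℝ),
      Dθ = fun ψ θ z => (Dx ψ (g (θ, z))).comp (Dg θ z) := ⟨_, rfl⟩
  have hDθ_cont : Continuous (fun p : ((Fin n → ℝ) × EuclideanSpace ℝ (Fin k)) × EuclideanSpace ℝ (Fin q) =>
      Dθ p.1.1 p.1.2 p.2) := by
    simp only [hDθs]
    exact Continuous.clm_comp
      (g := fun p : ((Fin n → ℝ) × EuclideanSpace ℝ (Fin k)) × EuclideanSpace ℝ (Fin q) =>
        Dx p.1.1 (g (p.1.2, p.2)))
      (f := fun p => Dg p.1.2 p.2)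
      (hDx_cont.comp ((continuous_fst.comp continuous_fst).prodMk
        (hg.continuous.comp ((continuous_snd.comp continuous_fst).prodMk continuous_snd))))
      (hDg_cont.comp ((continuous_snd.comp continuous_fst).prodMk continuous_snd))
  have hΦ_has : ∀ (ψ : Fin n → ℝ) (z : EuclideanSpace ℝ (Fin q)) (θ : EuclideanSpace ℝ (Fin k)),
      HasFDerivAt (fun θ' => -lam * Real.log
          ((1/(n:ℝ)) * ∑ i, Real.exp ((ψ i - c (g (θ', z), y i)) / lam)))
        (Dθ ψ θ z) θ := by
    intro ψ z θ
    simp only [hDθs]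
    exact (hDx_has ψ (g (θ, z))).comp θ (hDg_has θ z)
  -- Φ continuity (joint in (θ, z) for fixed ψ)
  have hΦ_cont : ∀ ψ : Fin n → ℝ, Continuous (fun p : EuclideanSpace ℝ (Fin k) × EuclideanSpace ℝ (Fin q) =>
      -lam * Real.log ((1/(n:ℝ)) * ∑ i, Real.exp ((ψ i - c (g p, y i)) / lam))) := by
    intro ψ
    apply continuous_const.mul
    apply Continuous.log
    · apply continuous_const.mul
      apply continuous_finset_sum
      intro i _
      exact Real.continuous_exp.comp (((continuous_const.sub
        (hc.continuous.comp (hg.continuous.prodMk continuous_const))).div_const lam))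
    · intro p
      exact ne_of_gt (mul_pos (one_div_pos.mpr hnR) (hS_pos ψ (g p)))
  -- D
  obtain ⟨D, hDs⟩ : ∃ D : (Fin n → ℝ) → EuclideanSpace ℝ (Fin k) →
      (EuclideanSpace ℝ (Fin k) →L[ℝ] ℝ),
      D = fun ψ θ => ∫ z, Dθ ψ θ z ∂ζ := ⟨_, rfl⟩
  have hDθz_cont : ∀ (ψ : Fin n → ℝ) (θ : EuclideanSpace ℝ (Fin k)),
      Continuous (fun z => Dθ ψ θ z) :=
    fun ψ θ => hDθ_cont.comp ((continuous_const (y := ((ψ, θ) : (Fin n → ℝ) × EuclideanSpace ℝ (Fin k)))).prodMk continuous_id)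
  have hDθ_int : ∀ (ψ : Fin n → ℝ) (θ : EuclideanSpace ℝ (Fin k)),
      Integrable (fun z => Dθ ψ θ z) ζ := by
    intro ψ θ
    obtain ⟨C, hC⟩ := hK.exists_bound_of_continuousOn ((hDθz_cont ψ θ).continuousOn)
    apply Integrable.mono' (integrable_const C) ((hDθz_cont ψ θ).aestronglyMeasurable)
    filter_upwards [hK_ae] with z hz using hC z hz
  -- derivative of F ψ
  have hFd : ∀ (ψ : Fin n → ℝ) (θ : EuclideanSpace ℝ (Fin k)), HasFDerivAt (F ψ) (D ψ θ) θ := by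
    intro ψ θ
    have hFψ : F ψ = fun θ' => (∫ z, (-lam * Real.log
        ((1/(n:ℝ)) * ∑ i, Real.exp ((ψ i - c (g (θ', z), y i)) / lam))) ∂ζ)
        + (1/(n:ℝ)) * ∑ i, ψ i := funext fun θ' => hF ψ θ'
    rw [hFψ, hDs]
    apply HasFDerivAt.add_const
    have hBcomp : IsCompact ((Metric.closedBall θ 1) ×ˢ K) := (isCompact_closedBall θ 1).prod hK
    obtain ⟨C, hC⟩ := hBcomp.exists_bound_of_continuousOn
      ((hDθ_cont.comp ((continuous_const.prodMk continuous_fst).prodMk continuous_snd)).continuousOn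
        (f := fun p : EuclideanSpace ℝ (Fin k) × EuclideanSpace ℝ (Fin q) => Dθ ψ p.1 p.2))
    apply hasFDerivAt_integral_of_dominated_of_fderiv_le (Metric.ball_mem_nhds θ one_pos)
      (bound := fun _ => C) (F' := fun θ' z => Dθ ψ θ' z)
    · exact Eventually.of_forall fun θ' =>
        ((hΦ_cont ψ).comp (continuous_const.prodMk continuous_id)).aestronglyMeasurable
    · obtain ⟨C₀, hC₀⟩ := hK.exists_bound_of_continuousOn
        (((hΦ_cont ψ).comp (continuous_const.prodMk continuous_id)).continuousOn
          (f := fun z => -lam * Real.log ((1/(n:ℝ)) * ∑ i, Real.exp ((ψ i - c (g (θ, z), y i)) / lam))))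
      apply Integrable.mono' (integrable_const C₀)
        (((hΦ_cont ψ).comp (continuous_const.prodMk continuous_id)).aestronglyMeasurable)
      filter_upwards [hK_ae] with z hz using hC₀ z hz
    · exact (hDθz_cont ψ θ).aestronglyMeasurable
    · filter_upwards [hK_ae] with z hz θ' hθ'
      exact hC (θ', z) ⟨Metric.ball_subset_closedBall hθ', hz⟩
    · exact integrable_const C
    · exact Eventually.of_forall fun z θ' _ => hΦ_has ψ z θ'
  -- continuity of D at (s θ₀, θ₀)
  have hD_contAt : ContinuousAt (fun p : (Fin n → ℝ) × EuclideanSpace ℝ (Fin k) => D p.1 p.2)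
      (s θ₀, θ₀) := by
    simp only [hDs]
    have hNcomp : IsCompact (Metric.closedBall ((s θ₀, θ₀) : (Fin n → ℝ) × EuclideanSpace ℝ (Fin k)) 1) :=
      isCompact_closedBall _ _
    obtain ⟨C, hC⟩ := (hNcomp.prod hK).exists_bound_of_continuousOn (hDθ_cont.continuousOn)
    apply continuousAt_of_dominated (bound := fun _ => C)
    · exact Eventually.of_forall fun p =>
        (hDθ_cont.comp (continuous_const.prodMk continuous_id)).aestronglyMeasurable
    · filter_upwards [Metric.closedBall_mem_nhds ((s θ₀, θ₀) : (Fin n → ℝ) × EuclideanSpace ℝ (Fin k)) one_pos] with p hp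
      filter_upwards [hK_ae] with z hz
      exact hC (p, z) ⟨hp, hz⟩
    · exact integrable_const C
    · exact Eventually.of_forall fun z =>
        (hDθ_cont.comp (continuous_id.prodMk continuous_const)).continuousAt
  -- envelope theorem
  have hW := envelope_hasFDerivAt F D s θ₀ hFd hD_contAt hs.continuousAt hmax
  -- identify the gradient
  rw [hasGradientAt_iff_hasFDerivAt]
  have hgrad_eq : ∀ (i : Fin n) (x : EuclideanSpace ℝ (Fin d)),
      gradient (fun x' : EuclideanSpace ℝ (Fin d) => c (x', y i)) x
        = (InnerProductSpace.toDual ℝ (EuclideanSpace ℝ (Fin d))).symm (Dc x i) := by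
    intro i x
    rw [hDcs]
    rfl
  have hgrad_cont : ∀ i : Fin n, Continuous (fun x : EuclideanSpace ℝ (Fin d) =>
      gradient (fun x' => c (x', y i)) x) := by
    intro i
    rw [funext (hgrad_eq i)]
    exact (InnerProductSpace.toDual ℝ (EuclideanSpace ℝ (Fin d))).symm.continuous.comp (hDc_cont i)
  obtain ⟨v, hvs⟩ : ∃ v : EuclideanSpace ℝ (Fin q) → EuclideanSpace ℝ (Fin k),
      v = fun z => (ContinuousLinearMap.adjoint (Dg θ₀ z))
        (∑ i, eta (s θ₀) (g (θ₀, z)) i •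
          gradient (fun x : EuclideanSpace ℝ (Fin d) => c (x, y i)) (g (θ₀, z))) := ⟨_, rfl⟩
  have hv_cont : Continuous v := by
    rw [hvs]
    apply Continuous.clm_apply
    · exact (ContinuousLinearMap.adjoint :
        (EuclideanSpace ℝ (Fin k) →L[ℝ] EuclideanSpace ℝ (Fin d)) ≃ₗᵢ⋆[ℝ] _).continuous.comp
        (hDg_cont.comp (continuous_const.prodMk continuous_id))
    · apply continuous_finset_sum
      intro i _
      exact (((heta_cont i).comp ((continuous_const.prodMk
          (hg.continuous.comp (continuous_const.prodMk continuous_id))))).smul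
        ((hgrad_cont i).comp (hg.continuous.comp (continuous_const.prodMk continuous_id))))
  have hv_int : Integrable v ζ := by
    obtain ⟨C, hC⟩ := hK.exists_bound_of_continuousOn hv_cont.continuousOn
    apply Integrable.mono' (integrable_const C) hv_cont.aestronglyMeasurable
    filter_upwards [hK_ae] with z hz using hC z hz
  have hveq : (∫ z, (ContinuousLinearMap.adjoint
            (fderiv ℝ (fun θ' : EuclideanSpace ℝ (Fin k) => g (θ', z)) θ₀))
          (∑ i, (Real.exp ((s θ₀ i - c (g (θ₀, z), y i)) / lam) /
                ∑ j, Real.exp ((s θ₀ j - c (g (θ₀, z), y j)) / lam)) •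
              gradient (fun x : EuclideanSpace ℝ (Fin d) => c (x, y i)) (g (θ₀, z))) ∂ζ)
      = ∫ z, v z ∂ζ := by
    apply integral_congr_ae
    apply Filter.Eventually.of_forall
    intro z
    simp only [hvs, hDgs, hetas]
  rw [hveq]
  have hEq : (InnerProductSpace.toDual ℝ (EuclideanSpace ℝ (Fin k))) (∫ z, v z ∂ζ) = D (s θ₀) θ₀ := by
    ext w
    rw [InnerProductSpace.toDual_apply_apply]
    have hpt : ∀ z : EuclideanSpace ℝ (Fin q),
        (inner ℝ w (v z) : ℝ) = (Dθ (s θ₀) θ₀ z) w := by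
      intro z
      have h1 : (inner ℝ w (v z) : ℝ) = inner ℝ (v z) w := real_inner_comm _ _
      rw [h1, hvs]
      rw [ContinuousLinearMap.adjoint_inner_left]
      rw [sum_inner]
      have h2 : ∀ i : Fin n, (inner ℝ (eta (s θ₀) (g (θ₀, z)) i •
          gradient (fun x : EuclideanSpace ℝ (Fin d) => c (x, y i)) (g (θ₀, z)))
          ((Dg θ₀ z) w) : ℝ)
          = eta (s θ₀) (g (θ₀, z)) i * (Dc (g (θ₀, z)) i) ((Dg θ₀ z) w) := by
        intro i
        rw [real_inner_smul_left]
        congr 1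
        rw [hgrad_eq i, InnerProductSpace.toDual_symm_apply]
      rw [Finset.sum_congr rfl (fun i _ => h2 i)]
      have h3 : (Dθ (s θ₀) θ₀ z) w = (Dx (s θ₀) (g (θ₀, z))) ((Dg θ₀ z) w) := by rw [hDθs]; rfl
      rw [h3, hDxs]
      simp [ContinuousLinearMap.sum_apply]
    calc (inner ℝ (∫ z, v z ∂ζ) w : ℝ)
        = (inner ℝ w (∫ z, v z ∂ζ) : ℝ) := real_inner_comm _ _
      _ = ∫ z, (inner ℝ w (v z) : ℝ) ∂ζ := (integral_inner hv_int w).symm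
      _ = ∫ z, (Dθ (s θ₀) θ₀ z) w ∂ζ :=
          integral_congr_ae (Filter.Eventually.of_forall hpt)
      _ = (∫ z, Dθ (s θ₀) θ₀ z ∂ζ) w :=
          (ContinuousLinearMap.integral_apply (hDθ_int (s θ₀) θ₀) w).symm
      _ = (D (s θ₀) θ₀) w := by rw [hDs]
  rw [hEq]
  exact hW
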